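/- Let a : ℝ → (0,∞) and G : ℝ × ℝ → ℝ be continuous, with G locally Lipschitz in its first (momentum) variable uniformly in x. Suppose m, M ∈ C¹(ℝ) are bounded, m < M on ℝ, and a(x)m'(x) + G(m(x),x) < 0 < a(x)M'(x) + G(M(x),x) for all x. Then there exists f ∈ C¹(ℝ) solving a(x)f'(x) + G(f(x),x) = 0 on ℝ with m(x) < f(x) < M(x) for all x ∈ ℝ. -/

import Mathlib

open Set Filter Topology


/-- If `h x = 0` and `h' x < 0` then `h > 0` just left of `x`. -/
lemma eventually_pos_left {h : ℝ → ℝ} {x d : ℝ} (hd : HasDerivAt h d x)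
    (hx : h x = 0) (hneg : d < 0) : ∀ᶠ t in 𝓝[<] x, 0 < h t := by
  have hs : Tendsto (slope h x) (𝓝[≠] x) (𝓝 d) := hasDerivAt_iff_tendsto_slope.mp hd
  have h2 : ∀ᶠ t in 𝓝[≠] x, slope h x t < 0 := hs.eventually (eventually_lt_nhds hneg)
  have h3 : ∀ᶠ t in 𝓝[<] x, slope h x t < 0 :=
    h2.filter_mono (nhdsWithin_mono x fun t ht => ne_of_lt ht)
  filter_upwards [h3, self_mem_nhdsWithin] with t ht ht'
  rw [slope_def_field, hx, sub_zero, div_neg_iff] at ht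
  have htx : t < x := ht'
  rcases ht with ⟨h1, h2⟩ | ⟨h1, h2⟩
  · exact h1
  · linarith

/-- If `h x = 0` and `h' x < 0` then `h < 0` just right of `x`. -/
lemma eventually_neg_right {h : ℝ → ℝ} {x d : ℝ} (hd : HasDerivAt h d x)
    (hx : h x = 0) (hneg : d < 0) : ∀ᶠ t in 𝓝[>] x, h t < 0 := by
  have hs : Tendsto (slope h x) (𝓝[≠] x) (𝓝 d) := hasDerivAt_iff_tendsto_slope.mp hd
  have h2 : ∀ᶠ t in 𝓝[≠] x, slope h x t < 0 := hs.eventually (eventually_lt_nhds hneg)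
  have h3 : ∀ᶠ t in 𝓝[>] x, slope h x t < 0 :=
    h2.filter_mono (nhdsWithin_mono x fun t ht => ne_of_gt ht)
  filter_upwards [h3, self_mem_nhdsWithin] with t ht ht'
  rw [slope_def_field, hx, sub_zero, div_neg_iff] at ht
  have htx : x < t := ht'
  rcases ht with ⟨h1, h2⟩ | ⟨h1, h2⟩
  · linarith
  · exact h1

/-- Two global solutions of the same (locally-in-time Lipschitz) ODE agreeing at one point
agree everywhere. -/
lemma ode_global_eq {v : ℝ → ℝ → ℝ}
    (hl : ∀ A B : ℝ, ∃ K : NNReal, ∀ t ∈ Set.Icc A B, LipschitzWith K (v t))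
    {f g : ℝ → ℝ} (hf : ∀ t, HasDerivAt f (v t (f t)) t)
    (hg : ∀ t, HasDerivAt g (v t (g t)) t) {t0 : ℝ} (heq : f t0 = g t0) :
    ∀ t, f t = g t := by
  intro t
  set A : ℝ := min t0 t - 1 with hA
  set B : ℝ := max t0 t + 1 with hB
  obtain ⟨K, hK⟩ := hl A B
  set s : ℝ → Set ℝ := fun u => if u ∈ Icc A B then (univ : Set ℝ) else ∅ with hs
  have hv : ∀ u, LipschitzOnWith K (v u) (s u) := by
    intro u
    by_cases h : u ∈ Icc A B
    · simpa [hs, h] using (hK u h).lipschitzOnWith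
    · have : s u = ∅ := if_neg h
      rw [this]
      intro x hx
      exact absurd hx (Set.notMem_empty x)
  have hmem : ∀ (F : ℝ → ℝ), ∀ u ∈ Ioo A B, F u ∈ s u := by
    intro F u hu
    have : u ∈ Icc A B := Ioo_subset_Icc_self hu
    simp [hs, this.1, this.2]
  have ht0 : t0 ∈ Ioo A B := by
    constructor
    · have := min_le_left t0 t; simp only [hA]; linarith
    · have := le_max_left t0 t; simp only [hB]; linarith
  have key := ODE_solution_unique_of_mem_Icc (fun u _ => hv u) ht0
    (fun u _ => (hf u).continuousAt.continuousWithinAt)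
    (fun u _ => hf u) (hmem f)
    (fun u _ => (hg u).continuousAt.continuousWithinAt)
    (fun u _ => hg u) (hmem g) heq
  exact key ⟨by have := min_le_right t0 t; simp only [hA]; linarith,
    by have := le_max_right t0 t; simp only [hB]; linarith⟩

/-- Comparison: global solutions of the same ODE preserve strict order (in both
time directions), by uniqueness and the intermediate value theorem. -/
lemma ode_global_lt {v : ℝ → ℝ → ℝ}
    (hl : ∀ A B : ℝ, ∃ K : NNReal, ∀ t ∈ Set.Icc A B, LipschitzWith K (v t))
    {f g : ℝ → ℝ} (hf : ∀ t, HasDerivAt f (v t (f t)) t)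
    (hg : ∀ t, HasDerivAt g (v t (g t)) t) {t0 : ℝ} (hlt : f t0 < g t0) :
    ∀ t, f t < g t := by
  intro t
  by_contra hcon
  push_neg at hcon
  have hc : Continuous fun x => g x - f x := by
    have hfc : Continuous f := by
      rw [continuous_iff_continuousAt]; exact fun x => (hf x).continuousAt
    have hgc : Continuous g := by
      rw [continuous_iff_continuousAt]; exact fun x => (hg x).continuousAt
    exact hgc.sub hfc
  have h0 : (0:ℝ) ∈ uIcc (g t0 - f t0) (g t - f t) := by
    rw [Set.mem_uIcc]
    right
    constructor <;> linarith
  obtain ⟨t2, _, ht2⟩ := intermediate_value_uIcc (hc.continuousOn (s := uIcc t0 t)) h0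
  have ht2' : g t2 - f t2 = 0 := ht2
  have : f t2 = g t2 := by linarith
  have := ode_global_eq hl hf hg this t0
  exact absurd this (ne_of_lt hlt)

/-- A solution strictly below a strict supersolution stays below it forward in time. -/
lemma ode_barrier_upper {v : ℝ → ℝ → ℝ} {Mb f : ℝ → ℝ}
    (hMd : ∀ x, HasDerivAt Mb (deriv Mb x) x)
    (hst : ∀ x, v x (Mb x) < deriv Mb x)
    (hf : ∀ t, HasDerivAt f (v t (f t)) t)
    {s : ℝ} (hs : f s < Mb s) : ∀ t, s ≤ t → f t < Mb t := by
  intro t ht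
  by_contra hcon
  push_neg at hcon
  have hfc : Continuous f := by
    rw [continuous_iff_continuousAt]; exact fun x => (hf x).continuousAt
  have hMc : Continuous Mb := by
    rw [continuous_iff_continuousAt]; exact fun x => (hMd x).continuousAt
  set S : Set ℝ := {u | s ≤ u ∧ Mb u ≤ f u} with hS
  have hne : S.Nonempty := ⟨t, ht, hcon⟩
  have hbdd : BddBelow S := ⟨s, fun x hx => hx.1⟩
  have hcl : IsClosed S := by
    have : S = Ici s ∩ {u | Mb u ≤ f u} := by ext u; simp [hS, Ici]
    rw [this]
    exact isClosed_Ici.inter (isClosed_le hMc hfc)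
  set T : ℝ := sInf S with hT
  have hTS : T ∈ S := hcl.csInf_mem hne hbdd
  have hsT : s < T := by
    refine lt_of_le_of_ne hTS.1 fun h => absurd hTS.2 ?_
    rw [← h]; exact not_le.mpr hs
  have hbefore : ∀ u, s ≤ u → u < T → f u < Mb u := by
    intro u hu huT
    by_contra hcu
    push_neg at hcu
    exact absurd (csInf_le hbdd ⟨hu, hcu⟩) (not_le.mpr huT)
  -- g := Mb - f is positive on [s, T), ≤ 0 at T, hence = 0 at T by continuity.
  set g : ℝ → ℝ := fun u => Mb u - f u with hg
  have hgT_le : g T ≤ 0 := by simp [hg]; linarith [hTS.2]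
  have hgT_ge : 0 ≤ g T := by
    have hcg : ContinuousAt g T := (hMc.sub hfc).continuousAt
    have htend : Tendsto g (𝓝[<] T) (𝓝 (g T)) :=
      (hcg.continuousWithinAt : ContinuousWithinAt g (Iio T) T).tendsto
    refine ge_of_tendsto htend ?_
    filter_upwards [Ioo_mem_nhdsLT_of_mem ⟨hsT, le_rfl⟩] with u hu
    have := hbefore u hu.1.le hu.2
    simp only [hg]
    linarith
  have hgT : g T = 0 := le_antisymm hgT_le hgT_ge
  have hfT : f T = Mb T := by simp [hg] at hgT; linarith
  -- derivative of g at T is positive, but left slopes are ≤ 0.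
  have hgd : HasDerivAt g (deriv Mb T - v T (f T)) T := (hMd T).sub (hf T)
  have hdpos : 0 < deriv Mb T - v T (f T) := by rw [hfT]; linarith [hst T]
  have hslope : Tendsto (slope g T) (𝓝[≠] T) (𝓝 (deriv Mb T - v T (f T))) :=
    hasDerivAt_iff_tendsto_slope.mp hgd
  have hslope' : Tendsto (slope g T) (𝓝[<] T) (𝓝 (deriv Mb T - v T (f T))) :=
    hslope.mono_left (nhdsWithin_mono T fun u hu => ne_of_lt hu)
  have hle : deriv Mb T - v T (f T) ≤ 0 := by
    refine le_of_tendsto hslope' ?_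
    filter_upwards [Ioo_mem_nhdsLT_of_mem ⟨hsT, le_rfl⟩] with u hu
    have hgu : 0 < g u := by simp [hg]; linarith [hbefore u hu.1.le hu.2]
    rw [slope_def_field, hgT, sub_zero]
    apply le_of_lt
    apply div_neg_of_pos_of_neg hgu
    linarith [hu.2]
  linarith

/-- A solution starting on a strict supersolution drops strictly below it forward in time. -/
lemma ode_barrier_upper_eq {v : ℝ → ℝ → ℝ} {Mb f : ℝ → ℝ}
    (hMd : ∀ x, HasDerivAt Mb (deriv Mb x) x)
    (hst : ∀ x, v x (Mb x) < deriv Mb x)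
    (hf : ∀ t, HasDerivAt f (v t (f t)) t)
    {s : ℝ} (hs : f s = Mb s) : ∀ t, s < t → f t < Mb t := by
  intro t ht
  have hd : HasDerivAt (fun x => f x - Mb x) (v s (f s) - deriv Mb s) s :=
    (hf s).sub (hMd s)
  have hneg : v s (f s) - deriv Mb s < 0 := by rw [hs]; linarith [hst s]
  have hev := eventually_neg_right hd (by rw [hs, sub_self]) hneg
  have hmem : Ioo s t ∈ 𝓝[>] s := Ioo_mem_nhdsGT_of_mem ⟨le_rfl, ht⟩
  obtain ⟨t', ht'1, ht'2⟩ := (hev.and (eventually_of_mem hmem fun u hu => hu)).exists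
  exact ode_barrier_upper hMd hst hf (s := t') (by linarith) t ht'2.2.le

/-- A solution strictly above a strict subsolution stays above it forward in time. -/
lemma ode_barrier_lower {v : ℝ → ℝ → ℝ} {mb f : ℝ → ℝ}
    (hmd : ∀ x, HasDerivAt mb (deriv mb x) x)
    (hst : ∀ x, deriv mb x < v x (mb x))
    (hf : ∀ t, HasDerivAt f (v t (f t)) t)
    {s : ℝ} (hs : mb s < f s) : ∀ t, s ≤ t → mb t < f t := by
  have key := ode_barrier_upper (v := fun t y => -v t (-y)) (Mb := fun x => -mb x)
    (f := fun x => -f x)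
    (fun x => (hmd x).neg.congr_deriv deriv.neg.symm)
    (fun x => by simpa [deriv.neg] using hst x)
    (fun t => by simp only [neg_neg]; exact (hf t).neg)
    (s := s) (by simpa using hs)
  intro t hts
  have := key t hts
  simpa using this

/-- A solution starting on a strict subsolution rises strictly above it forward in time. -/
lemma ode_barrier_lower_eq {v : ℝ → ℝ → ℝ} {mb f : ℝ → ℝ}
    (hmd : ∀ x, HasDerivAt mb (deriv mb x) x)
    (hst : ∀ x, deriv mb x < v x (mb x))
    (hf : ∀ t, HasDerivAt f (v t (f t)) t)
    {s : ℝ} (hs : f s = mb s) : ∀ t, s < t → mb t < f t := by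
  have key := ode_barrier_upper_eq (v := fun t y => -v t (-y)) (Mb := fun x => -mb x)
    (f := fun x => -f x)
    (fun x => (hmd x).neg.congr_deriv deriv.neg.symm)
    (fun x => by simpa [deriv.neg] using hst x)
    (fun t => by simp only [neg_neg]; exact (hf t).neg)
    (s := s) (by simpa using hs)
  intro t hts
  have := key t hts
  simpa using this

lemma ode_global_exists {v : ℝ → ℝ → ℝ}
    (hct : ∀ y, Continuous fun t => v t y)
    (hl : ∀ A B : ℝ, ∃ K : NNReal, ∀ t ∈ Set.Icc A B, LipschitzWith K (v t))
    (hbd : ∀ A B : ℝ, ∃ C : ℝ, 0 ≤ C ∧ ∀ t ∈ Set.Icc A B, ∀ y, |v t y| ≤ C)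
    (t0 y0 : ℝ) :
    ∃ f : ℝ → ℝ, f t0 = y0 ∧ ∀ t, HasDerivAt f (v t (f t)) t := by
  have H : ∀ n : ℕ, ∃ f : ℝ → ℝ, f t0 = y0 ∧
      ∀ t ∈ Ioo (t0 - (n+1:ℝ)) (t0 + (n+1:ℝ)), HasDerivAt f (v t (f t)) t := by
    intro n
    obtain ⟨K, hK⟩ := hl (t0 - (n+1:ℝ)) (t0 + (n+1:ℝ))
    obtain ⟨C, hC0, hC⟩ := hbd (t0 - (n+1:ℝ)) (t0 + (n+1:ℝ))
    have hn : (0:ℝ) < (n:ℝ) + 1 := by positivity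
    have hpl : IsPicardLindelof v
        (⟨t0, by constructor <;> linarith⟩ : Icc (t0 - (n+1:ℝ)) (t0 + (n+1:ℝ))) y0
        ⟨C*((n:ℝ)+1), by positivity⟩ 0 ⟨C, hC0⟩ K :=
      { lipschitzOnWith := fun t ht => (hK t ht).lipschitzOnWith
        continuousOn := fun x _ => (hct x).continuousOn
        norm_le := fun t ht x _ => by rw [Real.norm_eq_abs]; exact hC t ht x
        mul_max_le := by
          have h1 : max (t0 + ((n:ℝ)+1) - t0) (t0 - (t0 - ((n:ℝ)+1))) = (n:ℝ)+1 := by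
            rw [max_eq_left (by linarith)]; ring
          dsimp only
          rw [h1]; simp; exact le_rfl }
    obtain ⟨f, hf0, hf⟩ := hpl.exists_eq_forall_mem_Icc_hasDerivWithinAt₀
    exact ⟨f, hf0, fun t ht =>
      (hf t (Ioo_subset_Icc_self ht)).hasDerivAt (Icc_mem_nhds ht.1 ht.2)⟩
  choose F hF0 hFd using H
  have hcons : ∀ j k : ℕ, j ≤ k →
      ∀ t ∈ Ioo (t0 - (j+1:ℝ)) (t0 + (j+1:ℝ)), F j t = F k t := by
    intro j k hjk
    obtain ⟨K, hK⟩ := hl (t0 - (j+1:ℝ)) (t0 + (j+1:ℝ))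
    set s : ℝ → Set ℝ :=
      fun u => if u ∈ Icc (t0 - (j+1:ℝ)) (t0 + (j+1:ℝ)) then (univ : Set ℝ) else ∅ with hs
    have hv : ∀ u, LipschitzOnWith K (v u) (s u) := by
      intro u
      by_cases h : u ∈ Icc (t0 - (j+1:ℝ)) (t0 + (j+1:ℝ))
      · simpa [hs, h] using (hK u h).lipschitzOnWith
      · have : s u = ∅ := if_neg h
        rw [this]; intro x hx; exact absurd hx (Set.notMem_empty x)
    have hjk' : (j:ℝ) + 1 ≤ (k:ℝ) + 1 := by exact_mod_cast by omega
    have hsub : Ioo (t0 - (j+1:ℝ)) (t0 + (j+1:ℝ)) ⊆ Ioo (t0 - (k+1:ℝ)) (t0 + (k+1:ℝ)) :=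
      Ioo_subset_Ioo (by linarith) (by linarith)
    have hmem : ∀ (Ff : ℝ → ℝ), ∀ u ∈ Ioo (t0 - (j+1:ℝ)) (t0 + (j+1:ℝ)), Ff u ∈ s u := by
      intro Ff u hu
      have h1 : u ∈ Icc (t0 - (j+1:ℝ)) (t0 + (j+1:ℝ)) := Ioo_subset_Icc_self hu
      simp only [hs, if_pos h1]
      trivial
    have hj0 : (0:ℝ) < (j:ℝ) + 1 := by positivity
    exact ODE_solution_unique_of_mem_Ioo (fun u _ => hv u) (t₀ := t0) ⟨by linarith, by linarith⟩
      (fun t ht => ⟨hFd j t ht, hmem (F j) t ht⟩)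
      (fun t ht => ⟨hFd k t (hsub ht), hmem (F k) t ht⟩)
      (by rw [hF0 j, hF0 k])
  refine ⟨fun x => F ⌊|x - t0|⌋₊ x, ?_, ?_⟩
  · simpa using hF0 0
  · intro x
    set K := ⌊|x - t0|⌋₊ with hKdef
    have hxK : x ∈ Ioo (t0 - (K+1:ℝ)) (t0 + (K+1:ℝ)) := by
      rcases abs_lt.mp (Nat.lt_floor_add_one |x - t0|) with ⟨h1, h2⟩
      exact ⟨by linarith, by linarith⟩
    have hloc : ∀ y ∈ Ioo (t0 - (K+1:ℝ)) (t0 + (K+1:ℝ)), F ⌊|y - t0|⌋₊ y = F K y := by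
      intro y hy
      have habs : |y - t0| < (K:ℝ) + 1 := abs_lt.mpr ⟨by linarith [hy.1], by linarith [hy.2]⟩
      have hfl : ⌊|y - t0|⌋₊ ≤ K := by
        have : ⌊|y - t0|⌋₊ < K + 1 := by
          rw [Nat.floor_lt (abs_nonneg _)]
          exact_mod_cast habs
        omega
      have hy' : y ∈ Ioo (t0 - ((⌊|y - t0|⌋₊:ℝ)+1)) (t0 + ((⌊|y - t0|⌋₊:ℝ)+1)) := by
        rcases abs_lt.mp (Nat.lt_floor_add_one |y - t0|) with ⟨h1, h2⟩
        exact ⟨by linarith, by linarith⟩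
      exact hcons _ K hfl y hy'
    have hev : (fun y => F ⌊|y - t0|⌋₊ y) =ᶠ[𝓝 x] F K :=
      eventually_of_mem (isOpen_Ioo.mem_nhds hxK) hloc
    exact (hFd K x hxK).congr_of_eventuallyEq hev

/-- Insertion of a global `C¹` solution of `a(x) f' + G(f, x) = 0` between a
bounded strict subsolution `m` and a bounded strict supersolution `M`. -/
theorem solution_between_sub_and_super
    (a : ℝ → ℝ) (G : ℝ → ℝ → ℝ) (m M : ℝ → ℝ)
    (ha_cont : Continuous a) (ha_pos : ∀ x, 0 < a x)
    (hG_cont : Continuous fun q : ℝ × ℝ => G q.1 q.2)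
    (hG_lip : ∀ R > (0:ℝ), ∃ C : ℝ, ∀ p q x, |p| ≤ R → |q| ≤ R →
      |G p x - G q x| ≤ C * |p - q|)
    (hm : ContDiff ℝ 1 m) (hM : ContDiff ℝ 1 M)
    (hm_bdd : ∃ C : ℝ, ∀ x, |m x| ≤ C) (hM_bdd : ∃ C : ℝ, ∀ x, |M x| ≤ C)
    (hmM : ∀ x, m x < M x)
    (hstrict : ∀ x, a x * deriv m x + G (m x) x < 0 ∧
      0 < a x * deriv M x + G (M x) x) :
    ∃ f : ℝ → ℝ, ContDiff ℝ 1 f ∧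
      (∀ x, a x * deriv f x + G (f x) x = 0) ∧
      ∀ x, m x < f x ∧ f x < M x := by
  classical
  obtain ⟨Cm, hCm⟩ := hm_bdd
  obtain ⟨CM, hCM⟩ := hM_bdd
  set R : ℝ := max Cm CM + 1 with hRdef
  have hCm0 : 0 ≤ Cm := (abs_nonneg _).trans (hCm 0)
  have hR0 : 0 < R := by
    have : Cm ≤ max Cm CM := le_max_left _ _
    simp only [hRdef]; linarith
  have hRm : ∀ x, |m x| ≤ R - 1 := fun x =>
    (hCm x).trans (by simp only [hRdef]; simp [le_max_left])
  have hRM : ∀ x, |M x| ≤ R - 1 := fun x =>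
    (hCM x).trans (by simp only [hRdef]; simp [le_max_right])
  set c : ℝ → ℝ := fun y => max (-R) (min y R) with hcdef
  have hc_eq : ∀ y, |y| ≤ R - 1 → c y = y := by
    intro y hy
    rcases abs_le.mp hy with ⟨h1, h2⟩
    simp only [hcdef]
    rw [min_eq_left (by linarith), max_eq_right (by linarith)]
  have hc_abs : ∀ y, |c y| ≤ R := by
    intro y
    rw [abs_le]
    constructor
    · exact le_max_left _ _
    · exact max_le (by linarith) (min_le_right _ _)
  have hc_lip : ∀ y z, |c y - c z| ≤ |y - z| := by
    intro y z
    simp only [hcdef]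
    calc |max (-R) (min y R) - max (-R) (min z R)|
        = |max (min y R) (-R) - max (min z R) (-R)| := by rw [max_comm (-R), max_comm (-R)]
      _ ≤ |min y R - min z R| := abs_max_sub_max_le_abs _ _ _
      _ ≤ max |y - z| |R - R| := abs_min_sub_min_le_max _ _ _ _
      _ ≤ |y - z| := by simp
  have hc_cont : Continuous c := continuous_const.max (continuous_id.min continuous_const)
  obtain ⟨CL, hCL⟩ := hG_lip R hR0
  set v : ℝ → ℝ → ℝ := fun t y => -(G (c y) t / a t) with hvdef
  have hvcont : Continuous fun p : ℝ × ℝ => v p.1 p.2 := by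
    apply Continuous.neg
    apply Continuous.div
    · exact hG_cont.comp ((hc_cont.comp continuous_snd).prodMk continuous_fst)
    · exact ha_cont.comp continuous_fst
    · exact fun p => (ha_pos p.1).ne'
  have hct : ∀ y, Continuous fun t => v t y := fun y =>
    hvcont.comp (continuous_id.prodMk continuous_const)
  have hl : ∀ A B : ℝ, ∃ K : NNReal, ∀ t ∈ Set.Icc A B, LipschitzWith K (v t) := by
    intro A B
    rcases le_or_gt A B with hAB | hAB
    · obtain ⟨x0, hx0mem, hx0⟩ := (isCompact_Icc (a := A) (b := B)).exists_isMinOn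
        (nonempty_Icc.mpr hAB) ha_cont.continuousOn
      set ε : ℝ := a x0 with hεdef
      have hε : 0 < ε := ha_pos x0
      refine ⟨Real.toNNReal (max CL 0 / ε), fun t ht => ?_⟩
      rw [lipschitzWith_iff_dist_le_mul]
      intro y z
      have hat : ε ≤ a t := hx0 ht
      have hat0 : 0 < a t := ha_pos t
      have key : |v t y - v t z| ≤ (max CL 0 / ε) * |y - z| := by
        have h1 : v t y - v t z = (G (c z) t - G (c y) t) / a t := by
          simp only [hvdef]; field_simp; ring
        rw [h1, abs_div, abs_of_pos hat0]
        have h2 : |G (c z) t - G (c y) t| ≤ CL * |c z - c y| :=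
          hCL _ _ t (hc_abs z) (hc_abs y)
        have h3 : CL * |c z - c y| ≤ max CL 0 * |y - z| := by
          rw [abs_sub_comm y z]
          have hlipzy := hc_lip z y
          have p1 : 0 ≤ (max CL 0 - CL) * |c z - c y| :=
            mul_nonneg (sub_nonneg.mpr (le_max_left CL 0)) (abs_nonneg _)
          have p2 : 0 ≤ max CL 0 * (|z - y| - |c z - c y|) :=
            mul_nonneg (le_max_right CL 0) (sub_nonneg.mpr hlipzy)
          nlinarith
        have h4 : |G (c z) t - G (c y) t| / a t ≤ max CL 0 * |y - z| / ε :=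
          div_le_div₀ (by positivity) (h2.trans h3) hε hat
        calc |G (c z) t - G (c y) t| / a t ≤ max CL 0 * |y - z| / ε := h4
          _ = (max CL 0 / ε) * |y - z| := by ring
      calc dist (v t y) (v t z) = |v t y - v t z| := Real.dist_eq _ _
        _ ≤ (max CL 0 / ε) * |y - z| := key
        _ ≤ (Real.toNNReal (max CL 0 / ε) : ℝ) * dist y z := by
            rw [Real.coe_toNNReal _ (by positivity), Real.dist_eq]
    · exact ⟨0, fun t ht => absurd (ht.1.trans ht.2) (not_le.mpr hAB)⟩
  have hbd : ∀ A B : ℝ, ∃ C : ℝ, 0 ≤ C ∧ ∀ t ∈ Set.Icc A B, ∀ y, |v t y| ≤ C := by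
    intro A B
    rcases le_or_gt A B with hAB | hAB
    · obtain ⟨x0, hx0mem, hx0⟩ := (isCompact_Icc (a := A) (b := B)).exists_isMinOn
        (nonempty_Icc.mpr hAB) ha_cont.continuousOn
      set ε : ℝ := a x0 with hεdef
      have hε : 0 < ε := ha_pos x0
      obtain ⟨C1, hC1⟩ := ((isCompact_Icc (a := -R) (b := R)).prod
        (isCompact_Icc (a := A) (b := B))).exists_bound_of_continuousOn
        hG_cont.continuousOn
      refine ⟨max C1 0 / ε, by positivity, fun t ht y => ?_⟩
      have hmem : ((c y, t) : ℝ × ℝ) ∈ Set.Icc (-R) R ×ˢ Set.Icc A B := by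
        refine ⟨abs_le.mp (hc_abs y), ht⟩
      have h1 : |G (c y) t| ≤ C1 := by
        have := hC1 _ hmem
        simpa [Real.norm_eq_abs] using this
      have hat : ε ≤ a t := hx0 ht
      have hat0 : 0 < a t := ha_pos t
      have : |v t y| = |G (c y) t| / a t := by
        simp only [hvdef, abs_neg, abs_div, abs_of_pos hat0]
      rw [this]
      exact div_le_div₀ (by positivity) (h1.trans (le_max_left _ _)) hε hat
    · exact ⟨0, le_rfl, fun t ht => absurd (ht.1.trans ht.2) (not_le.mpr hAB)⟩
  have hmD : ∀ x, HasDerivAt m (deriv m x) x := fun x =>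
    (hm.differentiable one_ne_zero x).hasDerivAt
  have hMD : ∀ x, HasDerivAt M (deriv M x) x := fun x =>
    (hM.differentiable one_ne_zero x).hasDerivAt
  have hstM : ∀ x, v x (M x) < deriv M x := by
    intro x
    have h2 := (hstrict x).2
    have hax := ha_pos x
    simp only [hvdef]
    rw [hc_eq _ (hRM x), ← neg_div, div_lt_iff₀ hax]
    nlinarith
  have hstm : ∀ x, deriv m x < v x (m x) := by
    intro x
    have h2 := (hstrict x).1
    have hax := ha_pos x
    simp only [hvdef]
    rw [hc_eq _ (hRm x), ← neg_div, lt_div_iff₀ hax]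
    nlinarith
  -- families of solutions starting on `m` (resp. on `M`) at time `-n`
  have hFex : ∀ n : ℕ, ∃ f : ℝ → ℝ, f (-(n:ℝ)) = m (-(n:ℝ)) ∧
      ∀ t, HasDerivAt f (v t (f t)) t := fun n => ode_global_exists hct hl hbd _ _
  choose F hFinit hFder using hFex
  have hGex : ∀ n : ℕ, ∃ f : ℝ → ℝ, f (-(n:ℝ)) = M (-(n:ℝ)) ∧
      ∀ t, HasDerivAt f (v t (f t)) t := fun n => ode_global_exists hct hl hbd _ _
  choose GS hGinit hGder using hGex
  have hFlow : ∀ n : ℕ, ∀ t, -(n:ℝ) < t → m t < F n t := fun n =>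
    ode_barrier_lower_eq hmD hstm (hFder n) (hFinit n)
  have hFup : ∀ n : ℕ, ∀ t, -(n:ℝ) ≤ t → F n t < M t := fun n =>
    ode_barrier_upper hMD hstM (hFder n) (by rw [hFinit n]; exact hmM _)
  have hGup : ∀ n : ℕ, ∀ t, -(n:ℝ) < t → GS n t < M t := fun n =>
    ode_barrier_upper_eq hMD hstM (hGder n) (hGinit n)
  have hGlow : ∀ n : ℕ, ∀ t, -(n:ℝ) ≤ t → m t < GS n t := fun n =>
    ode_barrier_lower hmD hstm (hGder n) (by rw [hGinit n]; exact hmM _)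
  set u : ℕ → ℝ := fun n => F n 0 with hudef
  set w : ℕ → ℝ := fun n => GS n 0 with hwdef
  have hu_lt : ∀ n, u n < u (n+1) := by
    intro n
    have h1 : F n (-(n:ℝ)) < F (n+1) (-(n:ℝ)) := by
      rw [hFinit n]
      exact hFlow (n+1) (-(n:ℝ)) (by push_cast; linarith)
    exact ode_global_lt hl (hFder n) (hFder (n+1)) h1 0
  have huw : ∀ k n : ℕ, u k < w n := by
    intro k n
    rcases le_total k n with h | h
    · have h1 : F k (-(k:ℝ)) < GS n (-(k:ℝ)) := by
        rw [hFinit k]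
        exact hGlow n _ (neg_le_neg (by exact_mod_cast h))
      exact ode_global_lt hl (hFder k) (hGder n) h1 0
    · have h1 : F k (-(n:ℝ)) < GS n (-(n:ℝ)) := by
        rw [hGinit n]
        exact hFup k _ (neg_le_neg (by exact_mod_cast h))
      exact ode_global_lt hl (hFder k) (hGder n) h1 0
  have hbddu : BddAbove (Set.range u) := ⟨w 0, by rintro _ ⟨k, rfl⟩; exact (huw k 0).le⟩
  set ystar : ℝ := sSup (Set.range u) with hydef
  have huy : ∀ n, u n ≤ ystar := fun n => le_csSup hbddu ⟨n, rfl⟩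
  have huy' : ∀ n, u n < ystar := fun n => lt_of_lt_of_le (hu_lt n) (huy (n+1))
  have hyw : ∀ n, ystar ≤ w n := fun n =>
    csSup_le (Set.range_nonempty u) (by rintro _ ⟨k, rfl⟩; exact (huw k n).le)
  obtain ⟨f, hf0, hfder⟩ := ode_global_exists hct hl hbd 0 ystar
  have hlow : ∀ x, m x < f x := by
    intro x
    obtain ⟨n, hn⟩ := exists_nat_gt (-x)
    have h1 : F n 0 < f 0 := by rw [hf0]; exact huy' n
    have h2 := ode_global_lt hl (hFder n) hfder h1 x
    exact lt_trans (hFlow n x (by linarith)) h2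
  have hup : ∀ x, f x < M x := by
    have hup0 : f 0 < M 0 := by
      rw [hf0]
      exact lt_of_le_of_lt (hyw 1) (hGup 1 0 (by norm_num))
    have hupnn : ∀ x, 0 ≤ x → f x < M x := fun x hx =>
      ode_barrier_upper hMD hstM hfder hup0 x hx
    have hnostrict : ∀ z, M z < f z → False := by
      intro z hz
      rcases le_or_gt 0 z with h0 | h0
      · exact absurd (hupnn z h0) (not_lt.mpr hz.le)
      · obtain ⟨n, hn⟩ := exists_nat_gt (-z)
        have h1 : GS n z < f z := lt_trans (hGup n z (by linarith)) hz
        have h2 := ode_global_lt hl (hGder n) hfder h1 0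
        rw [hf0] at h2
        exact absurd (hyw n) (not_le.mpr h2)
    intro x
    rcases lt_trichotomy (f x) (M x) with h | h | h
    · exact h
    · exfalso
      have hd : HasDerivAt (fun s => f s - M s) (v x (f x) - deriv M x) x :=
        (hfder x).sub (hMD x)
      have hneg : v x (f x) - deriv M x < 0 := by rw [h]; linarith [hstM x]
      have hev := eventually_pos_left hd (by rw [h, sub_self]) hneg
      obtain ⟨t', ht'⟩ := hev.exists
      exact hnostrict t' (by linarith)
    · exact absurd h (fun h => hnostrict x h)
  have hceq : ∀ x, c (f x) = f x := by
    intro x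
    apply hc_eq
    rw [abs_le]
    have h1 := hlow x
    have h2 := hup x
    rcases abs_le.mp (hRm x) with ⟨hm1, hm2⟩
    rcases abs_le.mp (hRM x) with ⟨hM1, hM2⟩
    constructor <;> linarith
  have hfc : Continuous f := continuous_iff_continuousAt.mpr fun x => (hfder x).continuousAt
  refine ⟨f, ?_, ?_, fun x => ⟨hlow x, hup x⟩⟩
  · rw [contDiff_one_iff_deriv]
    refine ⟨fun x => (hfder x).differentiableAt, ?_⟩
    have hde : deriv f = fun x => v x (f x) := funext fun x => (hfder x).deriv
    rw [hde]
    exact hvcont.comp (continuous_id.prodMk hfc)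
  · intro x
    have hd := (hfder x).deriv
    rw [hd]
    simp only [hvdef]
    rw [hceq x]
    have hax : a x ≠ 0 := (ha_pos x).ne'
    rw [mul_neg, neg_add_eq_zero, mul_comm, div_mul_cancel₀ _ hax]
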